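/- For any may-must argumentation F = (A, R, f_Q) in which every argument a has f_Q(a) = ((|pre(a)|, |pre(a)|), (1, 1)) where pre(a) is the set of attackers of a: a total labelling λ on A is an exact labelling of F if and only if λ is a complete labelling of the Dung argumentation framework (A, R), i.e., for every a ∈ A, λ(a) = in iff every attacker of a is labelled out, and λ(a) = out iff some attacker of a is labelled in. -/
import Mathlib


inductive Lab : Type
  | inn | out | undec
deriving DecidableEq

structure MMA (A : Type) [Fintype A] [DecidableEq A] where
  R : A → A → Prop
  decR : DecidableRel R
  n1 : A → ℕ
  n2 : A → ℕ
  m1 : A → ℕ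
  m2 : A → ℕ
  hn : ∀ a, n1 a ≤ n2 a
  hm : ∀ a, m1 a ≤ m2 a

variable {A : Type} [Fintype A] [DecidableEq A]

/-- Number of attackers of `a` labelled `out` by `lam`. -/
def outCnt (F : MMA A) (lam : A → Lab) (a : A) : ℕ :=
  letI := F.decR
  (Finset.univ.filter (fun b => F.R b a ∧ lam b = Lab.out)).card

/-- Number of attackers of `a` labelled `in` by `lam`. -/
def inCnt (F : MMA A) (lam : A → Lab) (a : A) : ℕ :=
  letI := F.decR
  (Finset.univ.filter (fun b => F.R b a ∧ lam b = Lab.inn)).card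

/-- `lam` designates label `l` for argument `a` in `F`. -/
def designates (F : MMA A) (lam : A → Lab) (a : A) : Lab → Prop
  | Lab.inn => F.n1 a ≤ outCnt F lam a ∧ inCnt F lam a < F.m2 a
  | Lab.out => F.m1 a ≤ inCnt F lam a ∧ outCnt F lam a < F.n2 a
  | Lab.undec =>
      (F.n2 a ≤ outCnt F lam a ∧ F.m2 a ≤ inCnt F lam a) ∨
      (F.n1 a ≤ outCnt F lam a ∧ outCnt F lam a < F.n2 a) ∨
      (F.m1 a ≤ inCnt F lam a ∧ inCnt F lam a < F.m2 a) ∨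
      (outCnt F lam a < F.n1 a ∧ inCnt F lam a < F.m1 a)

/-- `a`'s label is proper under `lam`. -/
def proper (F : MMA A) (lam : A → Lab) (a : A) : Prop :=
  designates F lam a (lam a)

/-- Exact labelling: every argument's label is proper. -/
def exactLab (F : MMA A) (lam : A → Lab) : Prop :=
  ∀ a, proper F lam a

/-- Pre-maximally proper labelling. -/
def preMaxProper (F : MMA A) (lam : A → Lab) : Prop :=
  ∀ a, proper F lam a ∨ lam a = Lab.undec

/-- Maximally proper labelling. -/
def maxProper (F : MMA A) (lam : A → Lab) : Prop :=
  preMaxProper F lam ∧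
    ∀ lam', preMaxProper F lam' → ∀ a, proper F lam' a → proper F lam a

/-- The order `⪯` on labellings. -/
def labLE (l1 l2 : A → Lab) : Prop :=
  ∀ a, (l1 a = Lab.inn → l2 a = Lab.inn) ∧ (l1 a = Lab.out → l2 a = Lab.out)

/-- Number of attackers of `a`. -/
def preCard (F : MMA A) (a : A) : ℕ :=
  letI := F.decR
  (Finset.univ.filter (fun b => F.R b a)).card

/-- Complete labelling of the underlying Dung framework. -/
def dungComplete (F : MMA A) (lam : A → Lab) : Prop :=
  ∀ a, (lam a = Lab.inn ↔ ∀ b, F.R b a → lam b = Lab.out) ∧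
       (lam a = Lab.out ↔ ∃ b, F.R b a ∧ lam b = Lab.inn)

lemma outCnt_le_preCard (F : MMA A) (lam : A → Lab) (a : A) :
    outCnt F lam a ≤ preCard F a := by
  letI := F.decR
  unfold outCnt preCard
  apply Finset.card_le_card
  intro b hb
  simp only [Finset.mem_filter] at *
  exact ⟨hb.1, hb.2.1⟩

lemma outCnt_eq_iff (F : MMA A) (lam : A → Lab) (a : A) :
    outCnt F lam a = preCard F a ↔ ∀ b, F.R b a → lam b = Lab.out := by
  letI := F.decR
  unfold outCnt preCard
  constructor
  · intro hcard b hb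
    have hsub : (Finset.univ.filter (fun b => F.R b a ∧ lam b = Lab.out)) ⊆
        (Finset.univ.filter (fun b => F.R b a)) := by
      intro b hb
      simp only [Finset.mem_filter] at *
      exact ⟨hb.1, hb.2.1⟩
    have := Finset.eq_of_subset_of_card_le hsub (le_of_eq hcard.symm)
    have hb' : b ∈ Finset.univ.filter (fun b => F.R b a) := by
      simp [hb]
    rw [← this] at hb'
    simp only [Finset.mem_filter] at hb'
    exact hb'.2.2
  · intro hall
    congr 1
    ext b
    simp only [Finset.mem_filter, Finset.mem_univ, true_and]
    exact ⟨fun h => h.1, fun h => ⟨h, hall b h⟩⟩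

lemma inCnt_pos_iff (F : MMA A) (lam : A → Lab) (a : A) :
    0 < inCnt F lam a ↔ ∃ b, F.R b a ∧ lam b = Lab.inn := by
  letI := F.decR
  unfold inCnt
  rw [Finset.card_pos]
  constructor
  · rintro ⟨b, hb⟩
    simp only [Finset.mem_filter, Finset.mem_univ, true_and] at hb
    exact ⟨b, hb⟩
  · rintro ⟨b, hb⟩
    exact ⟨b, by simp [hb.1, hb.2]⟩

lemma cnt_exclusive (F : MMA A) (lam : A → Lab) (a : A) :
    ¬(outCnt F lam a = preCard F a ∧ 0 < inCnt F lam a) := by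
  rintro ⟨hout, hin⟩
  obtain ⟨b, hb, hbin⟩ := (inCnt_pos_iff F lam a).mp hin
  have := (outCnt_eq_iff F lam a).mp hout b hb
  rw [hbin] at this
  exact Lab.noConfusion this

theorem stmt9 (F : MMA A)
    (h : ∀ a, F.n1 a = preCard F a ∧ F.n2 a = preCard F a ∧ F.m1 a = 1 ∧ F.m2 a = 1) :
    ∀ lam : A → Lab, exactLab F lam ↔ dungComplete F lam := by
  intro lam
  constructor
  · intro hex a
    obtain ⟨hn1, hn2, hm1, hm2⟩ := h a
    have hle := outCnt_le_preCard F lam a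
    have hprop : designates F lam a (lam a) := hex a
    constructor
    · constructor
      · intro hin
        rw [hin] at hprop
        obtain ⟨h1, h2⟩ := hprop
        rw [hn1] at h1
        exact (outCnt_eq_iff F lam a).mp (le_antisymm hle h1)
      · intro hall
        have hout : outCnt F lam a = preCard F a := (outCnt_eq_iff F lam a).mpr hall
        have hin0 : inCnt F lam a = 0 := by
          by_contra hne
          exact cnt_exclusive F lam a ⟨hout, Nat.pos_of_ne_zero hne⟩
        rcases hl : lam a with _ | _ | _
        · rfl
        · rw [hl] at hprop
          obtain ⟨h1, _⟩ := hprop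
          rw [hm1, hin0] at h1; omega
        · rw [hl] at hprop
          simp only [designates] at hprop
          rw [hn1, hn2, hm1, hm2, hin0, hout] at hprop
          omega
    · constructor
      · intro hlo
        rw [hlo] at hprop
        obtain ⟨h1, _⟩ := hprop
        rw [hm1] at h1
        exact (inCnt_pos_iff F lam a).mp h1
      · intro hex'
        have hin1 : 0 < inCnt F lam a := (inCnt_pos_iff F lam a).mpr hex'
        have hne : outCnt F lam a ≠ preCard F a := fun heq =>
          cnt_exclusive F lam a ⟨heq, hin1⟩
        have hlt : outCnt F lam a < preCard F a := lt_of_le_of_ne hle hne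
        rcases hl : lam a with _ | _ | _
        · rw [hl] at hprop
          obtain ⟨h1, _⟩ := hprop
          rw [hn1] at h1; omega
        · rfl
        · rw [hl] at hprop
          simp only [designates] at hprop
          rw [hn1, hn2, hm1, hm2] at hprop
          omega
  · intro hcomp a
    obtain ⟨hn1, hn2, hm1, hm2⟩ := h a
    have hle := outCnt_le_preCard F lam a
    obtain ⟨hi, ho⟩ := hcomp a
    unfold proper
    rcases hl : lam a with _ | _ | _
    · have hall := hi.mp hl
      have hout : outCnt F lam a = preCard F a := (outCnt_eq_iff F lam a).mpr hall
      have hin0 : inCnt F lam a = 0 := by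
        by_contra hne
        exact cnt_exclusive F lam a ⟨hout, Nat.pos_of_ne_zero hne⟩
      show F.n1 a ≤ _ ∧ _ < F.m2 a
      rw [hn1, hm2, hout, hin0]; omega
    · have hexi := ho.mp hl
      have hin1 : 0 < inCnt F lam a := (inCnt_pos_iff F lam a).mpr hexi
      have hne : outCnt F lam a ≠ preCard F a := fun heq =>
        cnt_exclusive F lam a ⟨heq, hin1⟩
      show F.m1 a ≤ _ ∧ _ < F.n2 a
      rw [hm1, hn2]
      exact ⟨hin1, lt_of_le_of_ne hle hne⟩
    · have hnall : ¬ ∀ b, F.R b a → lam b = Lab.out := fun hall => by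
        rw [hi.mpr hall] at hl; exact Lab.noConfusion hl
      have hnex : ¬ ∃ b, F.R b a ∧ lam b = Lab.inn := fun hexi => by
        rw [ho.mpr hexi] at hl; exact Lab.noConfusion hl
      have hin0 : inCnt F lam a = 0 := by
        by_contra hne
        exact hnex ((inCnt_pos_iff F lam a).mp (Nat.pos_of_ne_zero hne))
      have hne : outCnt F lam a ≠ preCard F a := fun heq =>
        hnall ((outCnt_eq_iff F lam a).mp heq)
      refine Or.inr (Or.inr (Or.inr ?_))
      rw [hn1, hm1, hin0]
      exact ⟨lt_of_le_of_ne hle hne, one_pos⟩
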